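/- Let A₁,…,A_{n+2} be points on the unit sphere Sⁿ ⊂ ℝ^{n+1} in general position and α₁,…,α_{n+2} nonzero reals with Σᵢ αᵢAᵢ = 0. Then: (i) for all points P, Q ∈ Sⁿ with ⟨P,Q⟩ ≠ −1, one has Σᵢ αᵢ⟨Aᵢ − P, Aᵢ − Q⟩ / (1 + ⟨P,Q⟩) = Σᵢ αᵢ; in particular the quantity c₁ := 2·Σᵢ αᵢ⟨Aᵢ − P, Aᵢ − Q⟩/(1 + ⟨P,Q⟩) = 2Σᵢ αᵢ is independent of P and Q; and (ii) c₁ = 0, i.e. Σᵢ αᵢ = 0, if and only if the points A₁,…,A_{n+2} lie in a common n-dimensional affine hyperplane of ℝ^{n+1}. -/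

import Mathlib

/-- Points on the unit sphere of `ℝ^{d}` are in spherical general position if every `d` of
them are linearly independent. -/
def SphGeneralPosition {d m : ℕ} (A : Fin m → EuclideanSpace ℝ (Fin d)) : Prop :=
  ∀ s : Finset (Fin m), s.card = d → LinearIndependent ℝ (fun i : ↥s => A i.1)

private lemma linIndep_affineIndep {ι : Type*} {V : Type*} [AddCommGroup V] [Module ℝ V]
    {p : ι → V} (h : LinearIndependent ℝ p) : AffineIndependent ℝ p := by
  rw [affineIndependent_iff]
  intro s w _ hcomb i hi
  exact linearIndependent_iff'.mp h s w hcomb i hi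

/-- (i) For points `P, Q` on the sphere with `⟨P,Q⟩ ≠ −1`, the quantity
`Σᵢ αᵢ⟨Aᵢ − P, Aᵢ − Q⟩ / (1 + ⟨P,Q⟩)` equals `Σᵢ αᵢ`, hence is independent of `P` and `Q`;
(ii) `c₁ = 2Σᵢ αᵢ = 0` iff the points lie in a common `n`-dimensional affine hyperplane of
`ℝ^{n+1}`. -/
theorem spherical_c1 {n : ℕ}
    (A : Fin (n + 2) → EuclideanSpace ℝ (Fin (n + 1)))
    (hA : ∀ i, ‖A i‖ = 1)
    (hgp : SphGeneralPosition A)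
    (α : Fin (n + 2) → ℝ) (hα : ∀ i, α i ≠ 0)
    (hsum : ∑ i, α i • A i = 0) :
    (∀ P Q : EuclideanSpace ℝ (Fin (n + 1)), ‖P‖ = 1 → ‖Q‖ = 1 →
      (inner ℝ P Q : ℝ) ≠ -1 →
      (∑ i, α i * (inner ℝ (A i - P) (A i - Q) : ℝ)) / (1 + (inner ℝ P Q : ℝ))
        = ∑ i, α i) ∧
    ((∑ i, α i) = 0 ↔
      ∃ W : AffineSubspace ℝ (EuclideanSpace ℝ (Fin (n + 1))),
        Module.finrank ℝ W.direction = n ∧ ∀ i, A i ∈ W) := by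
  classical
  have hinner : ∀ Q : EuclideanSpace ℝ (Fin (n + 1)),
      (∑ i, α i * (inner ℝ (A i) Q : ℝ)) = 0 := by
    intro Q
    have h : (inner ℝ (∑ i, α i • A i) Q : ℝ) = ∑ i, α i * (inner ℝ (A i) Q : ℝ) := by
      rw [sum_inner]
      simp only [real_inner_smul_left]
    rw [← h, hsum, inner_zero_left]
  -- linear independence of the first `n+1` points
  set p : Fin (n + 1) → EuclideanSpace ℝ (Fin (n + 1)) := fun i => A i.castSucc with hpdef
  have hli : LinearIndependent ℝ p := by
    set s : Finset (Fin (n + 2)) := Finset.univ.image Fin.castSucc with hs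
    have hcard : s.card = n + 1 := by
      rw [hs, Finset.card_image_of_injective _ (Fin.castSucc_injective _), Finset.card_univ,
        Fintype.card_fin]
    have h := hgp s hcard
    have he : p = (fun i : ↥s => A i.1) ∘
        (fun k : Fin (n + 1) => (⟨Fin.castSucc k, by rw [hs]; exact Finset.mem_image_of_mem _ (Finset.mem_univ k)⟩ : ↥s)) := rfl
    rw [he]
    exact h.comp _ (fun a b hab =>
      Fin.castSucc_injective _ (by simpa using congrArg Subtype.val hab))
  have haff : AffineIndependent ℝ p := linIndep_affineIndep hli
  constructor
  · intro P Q hP hQ hPQ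
    have h1 : (1 : ℝ) + (inner ℝ P Q : ℝ) ≠ 0 := by
      intro h; apply hPQ; linarith
    have hexp : ∀ i, (inner ℝ (A i - P) (A i - Q) : ℝ)
        = 1 + (inner ℝ P Q : ℝ) - (inner ℝ (A i) Q : ℝ) - (inner ℝ (A i) P : ℝ) := by
      intro i
      have hAi : (inner ℝ (A i) (A i) : ℝ) = 1 := by
        rw [real_inner_self_eq_norm_sq, hA i]; norm_num
      rw [inner_sub_left, inner_sub_right, inner_sub_right, hAi, real_inner_comm P (A i)]
      ring
    have hkey : (∑ i, α i * (inner ℝ (A i - P) (A i - Q) : ℝ))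
        = (∑ i, α i) * (1 + (inner ℝ P Q : ℝ)) := by
      have hQ0 := hinner Q
      have hP0 := hinner P
      calc ∑ i, α i * (inner ℝ (A i - P) (A i - Q) : ℝ)
          = ∑ i, (α i * (1 + (inner ℝ P Q : ℝ)) - α i * (inner ℝ (A i) Q : ℝ)
              - α i * (inner ℝ (A i) P : ℝ)) := by
            refine Finset.sum_congr rfl fun i _ => ?_
            rw [hexp i]; ring
        _ = (∑ i, α i) * (1 + (inner ℝ P Q : ℝ)) - (∑ i, α i * (inner ℝ (A i) Q : ℝ))
              - (∑ i, α i * (inner ℝ (A i) P : ℝ)) := by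
            rw [Finset.sum_sub_distrib, Finset.sum_sub_distrib, ← Finset.sum_mul]
        _ = (∑ i, α i) * (1 + (inner ℝ P Q : ℝ)) := by rw [hQ0, hP0]; ring
    rw [hkey, mul_div_assoc, div_self h1, mul_one]
  · constructor
    · intro hzero
      set j : Fin (n + 2) := Fin.last (n + 1) with hj
      have hαj : α j ≠ 0 := hα j
      have hsum' : ∑ i : Fin (n + 1), α i.castSucc • p i = -(α j • A j) := by
        have h := hsum
        rw [Fin.sum_univ_castSucc] at h
        exact eq_neg_of_add_eq_zero_left h
      have hwsum : ∑ i : Fin (n + 1), α i.castSucc = -(α j) := by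
        have h := hzero
        rw [Fin.sum_univ_castSucc] at h
        linarith
      set w : Fin (n + 1) → ℝ := fun i => α i.castSucc / (-(α j)) with hw
      have hw1 : ∑ i, w i = 1 := by
        simp only [hw]
        rw [← Finset.sum_div, hwsum]
        field_simp
      have hcomb : ∑ i, w i • p i = A j := by
        have : ∑ i, w i • p i = (-(α j))⁻¹ • ∑ i, α i.castSucc • p i := by
          rw [Finset.smul_sum]
          refine Finset.sum_congr rfl fun i _ => ?_
          simp only [hw, div_eq_inv_mul, mul_smul]
        rw [this, hsum', ← neg_smul, inv_smul_smul₀ (neg_ne_zero.mpr hαj)]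
      have hmem : A j ∈ affineSpan ℝ (Set.range p) := by
        rw [← Finset.univ.affineCombination_eq_linear_combination p w hw1] at hcomb
        rw [← hcomb]
        exact affineCombination_mem_affineSpan hw1 p
      refine ⟨affineSpan ℝ (Set.range p), ?_, ?_⟩
      · rw [direction_affineSpan]
        exact haff.finrank_vectorSpan (by simp)
      · intro i
        induction i using Fin.lastCases with
        | last => exact hmem
        | cast k => exact subset_affineSpan ℝ _ ⟨k, rfl⟩
    · rintro ⟨W, hWrank, hWmem⟩
      by_contra hne
      have h0 : (0 : EuclideanSpace ℝ (Fin (n + 1))) ∈ W := by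
        set w : Fin (n + 2) → ℝ := fun i => α i / (∑ i, α i) with hw
        have hw1 : ∑ i, w i = 1 := by
          simp only [hw]
          rw [← Finset.sum_div]
          field_simp
        have hcomb : ∑ i, w i • A i = 0 := by
          have : ∑ i, w i • A i = (∑ i, α i)⁻¹ • ∑ i, α i • A i := by
            rw [Finset.smul_sum]
            refine Finset.sum_congr rfl fun i _ => ?_
            simp only [hw, div_eq_inv_mul, mul_smul]
          rw [this, hsum, smul_zero]
        have hmem := affineCombination_mem_affineSpan hw1 A
        rw [Finset.univ.affineCombination_eq_linear_combination A w hw1, hcomb] at hmem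
        have hle : affineSpan ℝ (Set.range A) ≤ W :=
          affineSpan_le.mpr (Set.range_subset_iff.mpr hWmem)
        exact hle hmem
      have hv : ∀ i, A i ∈ W.direction := fun i => by
        have h := AffineSubspace.vsub_mem_direction (hWmem i) h0
        simpa using h
      set b : Fin (n + 1) → W.direction := fun i => ⟨p i, hv _⟩ with hb
      have hbli : LinearIndependent ℝ b := by
        apply LinearIndependent.of_comp W.direction.subtype
        exact hli
      have hcard := hbli.fintype_card_le_finrank
      rw [hWrank] at hcard
      simp at hcard
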